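/- Let s > 1, 0 < α < n/s, 0 < r ≤ s. For every quasi-everywhere defined u, ‖u‖_F ≤ D ‖u‖_{L^{s/r}(cap_{α,s})} for a constant D depending only on s, r (and n, α), where ‖u‖_F = inf{‖f‖_{L^s}^r : f ≥ 0, I_α f ≥ |u|^{1/r} q.e.}. The proof decomposes |u| = Σ_{i∈ℤ} |u| χ_{E_i} with E_i = {2^i ≤ |u| < 2^{i+1}}, takes near-optimal f_i for each piece, and uses f = sup_i f_i with f^s ≤ Σ_i f_i^s. -/

import Mathlib

open MeasureTheory ENNReal Set Filter

noncomputable section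

/-- Euclidean space ℝⁿ. -/
abbrev Rn (n : ℕ) := EuclideanSpace ℝ (Fin n)

/-- The normalizing constant γ(n,α) of the Riesz potential. -/
noncomputable def rieszConst (n : ℕ) (α : ℝ) : ℝ :=
  Real.Gamma (((n : ℝ) - α) / 2) / (Real.pi ^ ((n : ℝ) / 2) * 2 ^ α * Real.Gamma (α / 2))

/-- The Riesz potential I_α f(x) = γ(n,α) ∫ |x-y|^{α-n} f(y) dy of a nonnegative function. -/
noncomputable def rieszPotential (n : ℕ) (α : ℝ) (f : Rn n → ℝ≥0∞) (x : Rn n) : ℝ≥0∞ :=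
  ENNReal.ofReal (rieszConst n α) * ∫⁻ y, ENNReal.ofReal (‖x - y‖ ^ (α - (n : ℝ))) * f y

/-- The Riesz capacity cap_{α,s}(E) = inf{‖f‖_{L^s}^s : f ≥ 0, I_α f ≥ 1 on E}. -/
noncomputable def rieszCap (n : ℕ) (α s : ℝ) (E : Set (Rn n)) : ℝ≥0∞ :=
  ⨅ (f : Rn n → ℝ≥0∞) (_ : Measurable f ∧ ∀ x ∈ E, 1 ≤ rieszPotential n α f x),
    ∫⁻ y, f y ^ s

/-- The Choquet integral ∫ g dC = ∫₀^∞ C({g > t}) dt. -/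
noncomputable def choquet {n : ℕ} (C : Set (Rn n) → ℝ≥0∞) (g : Rn n → ℝ≥0∞) : ℝ≥0∞ :=
  ∫⁻ t in Set.Ioi (0 : ℝ), C {x | ENNReal.ofReal t < g x}

/-- The gauge ‖u‖_F = inf{‖f‖_{L^s}^r : f ≥ 0, I_α f ≥ |u|^{1/r} q.e.} (inf ∅ = ⊤). -/
noncomputable def Fgauge (n : ℕ) (α s r : ℝ) (u : Rn n → ℝ≥0∞) : ℝ≥0∞ :=
  ⨅ (f : Rn n → ℝ≥0∞)
    (_ : Measurable f ∧
      rieszCap n α s {x | rieszPotential n α f x < u x ^ (1 / r)} = 0),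
    (∫⁻ y, f y ^ s) ^ (r / s)

/-- The Wolff potential W_{α,s}μ(x) = ∫₀^∞ (μ(B_t(x))/t^{n-αs})^{1/(s-1)} dt/t. -/
noncomputable def wolff (n : ℕ) (α s : ℝ) (μ : Measure (Rn n)) (x : Rn n) : ℝ≥0∞ :=
  ∫⁻ t in Set.Ioi (0 : ℝ),
    (μ (Metric.ball x t) / ENNReal.ofReal (t ^ ((n : ℝ) - α * s))) ^ (1 / (s - 1)) /
      ENNReal.ofReal t

/-- The truncated Wolff potential W^R_{α,s}μ(x) = ∫₀^R (μ(B_t(x))/t^{n-αs})^{1/(s-1)} dt/t. -/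
noncomputable def wolffT (n : ℕ) (α s R : ℝ) (μ : Measure (Rn n)) (x : Rn n) : ℝ≥0∞ :=
  ∫⁻ t in Set.Ioc (0 : ℝ) R,
    (μ (Metric.ball x t) / ENNReal.ofReal (t ^ ((n : ℝ) - α * s))) ^ (1 / (s - 1)) /
      ENNReal.ofReal t

/-- The support of a measure: points all of whose balls have positive measure. -/
def measSupport {n : ℕ} (μ : Measure (Rn n)) : Set (Rn n) :=
  {x | ∀ r > 0, 0 < μ (Metric.ball x r)}

lemma rieszCap_mono (n : ℕ) (α s : ℝ) {E F : Set (Rn n)} (h : E ⊆ F) :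
    rieszCap n α s E ≤ rieszCap n α s F :=
  le_iInf₂ fun f hf => iInf₂_le f ⟨hf.1, fun x hx => hf.2 x (h hx)⟩

lemma rieszPotential_mono (n : ℕ) (α : ℝ) {f g : Rn n → ℝ≥0∞} (h : ∀ y, f y ≤ g y) (x : Rn n) :
    rieszPotential n α f x ≤ rieszPotential n α g x :=
  mul_le_mul_right (lintegral_mono fun y => mul_le_mul_right (h y) _) _

lemma rieszPotential_const_mul (n : ℕ) (α : ℝ) (c : ℝ≥0∞) (hc : c ≠ ⊤) (f : Rn n → ℝ≥0∞)
    (x : Rn n) : rieszPotential n α (fun y => c * f y) x = c * rieszPotential n α f x := by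
  unfold rieszPotential
  rw [show (fun y => ENNReal.ofReal (‖x - y‖ ^ (α - (n:ℝ))) * (c * f y))
      = fun y => c * (ENNReal.ofReal (‖x - y‖ ^ (α - (n:ℝ))) * f y) from funext fun y => by ring,
    lintegral_const_mul' c _ hc]
  ring

lemma two_rpow_eq_ofReal (y : ℝ) : (2:ℝ≥0∞) ^ y = ENNReal.ofReal ((2:ℝ) ^ y) := by
  calc (2:ℝ≥0∞) ^ y = ENNReal.ofReal 2 ^ y := by norm_num
  _ = ENNReal.ofReal ((2:ℝ) ^ y) := ENNReal.ofReal_rpow_of_pos two_pos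

lemma two_rpow_ne_top (y : ℝ) : (2:ℝ≥0∞) ^ y ≠ ⊤ := by
  rw [two_rpow_eq_ofReal]; exact ENNReal.ofReal_ne_top

lemma two_rpow_ne_zero (y : ℝ) : (2:ℝ≥0∞) ^ y ≠ 0 :=
  (ENNReal.rpow_pos (by norm_num) (by norm_num)).ne'

lemma exists_dyadic {v : ℝ≥0∞} (h0 : v ≠ 0) (ht : v ≠ ⊤) :
    ∃ i : ℤ, (2:ℝ≥0∞) ^ (i:ℝ) ≤ v ∧ v < (2:ℝ≥0∞) ^ ((i:ℝ)+1) := by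
  have hw0 : 0 < v.toReal := ENNReal.toReal_pos h0 ht
  have hv : v = ENNReal.ofReal v.toReal := (ENNReal.ofReal_toReal ht).symm
  refine ⟨⌊Real.logb 2 v.toReal⌋, ?_, ?_⟩
  · have h1 : (2:ℝ) ^ ((⌊Real.logb 2 v.toReal⌋:ℝ)) ≤ v.toReal := by
      calc (2:ℝ) ^ ((⌊Real.logb 2 v.toReal⌋:ℝ)) ≤ 2 ^ (Real.logb 2 v.toReal) :=
        Real.rpow_le_rpow_of_exponent_le one_le_two (Int.floor_le _)
      _ = v.toReal := Real.rpow_logb two_pos (by norm_num) hw0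
    rw [two_rpow_eq_ofReal]
    exact le_trans (ENNReal.ofReal_le_ofReal h1) hv.ge
  · have h2 : v.toReal < (2:ℝ) ^ ((⌊Real.logb 2 v.toReal⌋:ℝ)+1) := by
      calc v.toReal = 2 ^ (Real.logb 2 v.toReal) := (Real.rpow_logb two_pos (by norm_num) hw0).symm
      _ < (2:ℝ) ^ ((⌊Real.logb 2 v.toReal⌋:ℝ)+1) :=
        Real.rpow_lt_rpow_of_exponent_lt one_lt_two (Int.lt_floor_add_one _)
    rw [two_rpow_eq_ofReal]
    exact lt_of_le_of_lt hv.le ((ENNReal.ofReal_lt_ofReal_iff (by positivity)).mpr h2)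

/-- ‖u‖_F ≤ D ‖u‖_{L^{s/r}(cap_{α,s})}. -/
theorem stmt11 (n : ℕ) (α s r : ℝ) (hs : 1 < s) (hα : 0 < α) (hαn : α < n / s)
    (hr : 0 < r) (hrs : r ≤ s) :
    ∃ D : ℝ≥0∞, D ≠ ⊤ ∧ ∀ u : Rn n → ℝ≥0∞,
      Fgauge n α s r u ≤
        D * choquet (rieszCap n α s) (fun x => u x ^ (s / r)) ^ (r / s) := by
  have hs0 : (0:ℝ) < s := lt_trans one_pos hs
  have hs0' : s ≠ 0 := hs0.ne'
  have hr0' : r ≠ 0 := hr.ne'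
  set a : ℝ := s / r with ha_def
  have ha : 0 < a := div_pos hs0 hr
  have hrs_pos : 0 < r / s := div_pos hr hs0
  -- the constant
  have h2a : (2:ℝ) ^ (-a) < 1 := Real.rpow_lt_one_of_one_lt_of_neg one_lt_two (neg_neg_iff_pos.mpr ha)
  set c0 : ℝ := (2:ℝ) ^ a / (1 - 2 ^ (-a)) with hc0_def
  have hc0 : 0 < c0 := div_pos (Real.rpow_pos_of_pos two_pos a) (by linarith)
  set K : ℝ≥0∞ := ENNReal.ofReal c0 with hK_def
  have hK0 : K ≠ 0 := (ENNReal.ofReal_pos.mpr hc0).ne'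
  have hKt : K ≠ ⊤ := ENNReal.ofReal_ne_top
  refine ⟨K ^ (r/s), ENNReal.rpow_ne_top_of_nonneg hrs_pos.le hKt, fun u => ?_⟩
  set ch : ℝ≥0∞ := choquet (rieszCap n α s) (fun x => u x ^ a) with hch_def
  by_cases hch : ch = ⊤
  · rw [hch, ENNReal.top_rpow_of_pos hrs_pos,
      ENNReal.mul_top ((ENNReal.rpow_pos (hK0.bot_lt) hKt).ne')]
    exact le_top
  -- main case
  set g : ℝ → ℝ≥0∞ := fun t => rieszCap n α s {x | ENNReal.ofReal t < u x ^ a} with hg_def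
  have hg_anti : Antitone g := fun t₁ t₂ h => rieszCap_mono n α s
    (fun x hx => lt_of_le_of_lt (ENNReal.ofReal_le_ofReal h) hx)
  have hg_meas : Measurable g := hg_anti.measurable
  have hch_eq : ch = ∫⁻ t in Set.Ioi (0:ℝ), g t := rfl
  set E : ℤ → Set (Rn n) := fun i => {x | (2:ℝ≥0∞) ^ (i:ℝ) ≤ u x ∧ u x < (2:ℝ≥0∞) ^ ((i:ℝ)+1)}
    with hE_def
  set I : ℤ → Set ℝ := fun i => Set.Ioo ((2:ℝ) ^ (a*((i:ℝ)-1))) ((2:ℝ) ^ (a*(i:ℝ))) with hI_def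
  have hI_meas : ∀ i, MeasurableSet (I i) := fun i => measurableSet_Ioo
  have hI_sub : ∀ i, I i ⊆ Set.Ioi (0:ℝ) := fun i t ht =>
    lt_trans (Real.rpow_pos_of_pos two_pos _) ht.1
  have hI_disj : Pairwise (Function.onFun Disjoint I) := by
    have key : ∀ i j : ℤ, i < j → Disjoint (I i) (I j) := by
      intro i j hij
      rw [Set.disjoint_left]
      rintro t ⟨_, ht2⟩ ⟨ht1, _⟩
      have hij' : (i:ℝ) ≤ (j:ℝ) - 1 := by
        have := Int.add_one_le_iff.mpr hij
        have : ((i:ℤ):ℝ) + 1 ≤ ((j:ℤ):ℝ) := by exact_mod_cast this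
        linarith
      have : (2:ℝ) ^ (a*(i:ℝ)) ≤ 2 ^ (a*((j:ℝ)-1)) :=
        Real.rpow_le_rpow_of_exponent_le one_le_two
          (mul_le_mul_of_nonneg_left hij' ha.le)
      linarith
    intro i j hij
    rcases hij.lt_or_gt with h | h
    · exact key _ _ h
    · exact (key _ _ h).symm
  -- key per-piece inequality
  have keyineq : ∀ i : ℤ,
      (2:ℝ≥0∞) ^ (a*((i:ℝ)+1)) * rieszCap n α s (E i) ≤ K * ∫⁻ t in I i, g t := by
    intro i
    have hlow : ∀ t ∈ I i, rieszCap n α s (E i) ≤ g t := by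
      intro t ht
      apply rieszCap_mono
      intro x hx
      have h1 : (2:ℝ≥0∞) ^ (a*(i:ℝ)) ≤ u x ^ a := by
        calc (2:ℝ≥0∞) ^ (a*(i:ℝ)) = ((2:ℝ≥0∞) ^ ((i:ℝ))) ^ a := by
              rw [← ENNReal.rpow_mul]; ring_nf
        _ ≤ u x ^ a := ENNReal.rpow_le_rpow hx.1 ha.le
      have h2 : ENNReal.ofReal t < (2:ℝ≥0∞) ^ (a*(i:ℝ)) := by
        rw [two_rpow_eq_ofReal]
        exact (ENNReal.ofReal_lt_ofReal_iff (Real.rpow_pos_of_pos two_pos _)).mpr ht.2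
      exact h2.trans_le h1
    have hint : rieszCap n α s (E i) * volume (I i) ≤ ∫⁻ t in I i, g t := by
      rw [← setLIntegral_const (I i) (rieszCap n α s (E i))]
      exact setLIntegral_mono hg_meas hlow
    have hvol : K * volume (I i) = (2:ℝ≥0∞) ^ (a*((i:ℝ)+1)) := by
      rw [hI_def]
      simp only
      rw [Real.volume_Ioo, hK_def, ← ENNReal.ofReal_mul hc0.le, two_rpow_eq_ofReal]
      congr 1
      have e1 : (2:ℝ) ^ (a*((i:ℝ)-1)) = 2 ^ (a*(i:ℝ)) * 2 ^ (-a) := by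
        rw [show a*((i:ℝ)-1) = a*(i:ℝ) + (-a) by ring, Real.rpow_add two_pos]
      have e2 : (2:ℝ) ^ (a*((i:ℝ)+1)) = 2 ^ (a*(i:ℝ)) * 2 ^ a := by
        rw [show a*((i:ℝ)+1) = a*(i:ℝ) + a by ring, Real.rpow_add two_pos]
      have hd : (1:ℝ) - 2^(-a) ≠ 0 := by linarith
      have e3 : (2:ℝ) ^ (a*(i:ℝ)) - 2 ^ (a*(i:ℝ)) * 2 ^ (-a)
          = 2 ^ (a*(i:ℝ)) * (1 - 2 ^ (-a)) := by ring
      rw [e1, e2, hc0_def, e3]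
      field_simp
    calc (2:ℝ≥0∞) ^ (a*((i:ℝ)+1)) * rieszCap n α s (E i)
        = K * (rieszCap n α s (E i) * volume (I i)) := by rw [← hvol]; ring
    _ ≤ K * ∫⁻ t in I i, g t := mul_le_mul_right hint K
  -- sum over pieces
  have hsum : ∑' i : ℤ, (2:ℝ≥0∞) ^ (a*((i:ℝ)+1)) * rieszCap n α s (E i) ≤ K * ch := by
    calc ∑' i : ℤ, (2:ℝ≥0∞) ^ (a*((i:ℝ)+1)) * rieszCap n α s (E i)
        ≤ ∑' i : ℤ, K * ∫⁻ t in I i, g t := ENNReal.tsum_le_tsum keyineq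
    _ = K * ∑' i : ℤ, ∫⁻ t in I i, g t := ENNReal.tsum_mul_left
    _ = K * ∫⁻ t in ⋃ i, I i, g t := by rw [lintegral_iUnion hI_meas hI_disj]
    _ ≤ K * ∫⁻ t in Set.Ioi (0:ℝ), g t :=
        mul_le_mul_right (lintegral_mono_set (Set.iUnion_subset hI_sub)) K
    _ = K * ch := by rw [hch_eq]
  have hKch : K * ch ≠ ⊤ := ENNReal.mul_ne_top hKt hch
  have capfin : ∀ i : ℤ, rieszCap n α s (E i) ≠ ⊤ := by
    intro i hcontra
    have h1 := (keyineq i).trans (mul_le_mul_right (lintegral_mono_set (hI_sub i)) K)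
    rw [hcontra, ENNReal.mul_top (two_rpow_ne_zero _)] at h1
    have h2 : K * ∫⁻ t in Set.Ioi (0:ℝ), g t = K * ch := by rw [hch_eq]
    exact hKch (top_le_iff.mp (h1.trans_eq h2))
  have captop : rieszCap n α s {x | u x = ⊤} = 0 := by
    by_contra h0
    have hle : ∀ t ∈ Set.Ioi (0:ℝ), rieszCap n α s {x | u x = ⊤} ≤ g t := by
      intro t _
      apply rieszCap_mono
      intro x hx
      simp only [Set.mem_setOf_eq] at hx ⊢
      rw [hx, ENNReal.top_rpow_of_pos ha]
      exact ENNReal.ofReal_lt_top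
    have : (⊤:ℝ≥0∞) ≤ ch := by
      calc (⊤:ℝ≥0∞) = rieszCap n α s {x | u x = ⊤} * volume (Set.Ioi (0:ℝ)) := by
            rw [Real.volume_Ioi, ENNReal.mul_top h0]
      _ = ∫⁻ t in Set.Ioi (0:ℝ), rieszCap n α s {x | u x = ⊤} :=
            (setLIntegral_const _ _).symm
      _ ≤ ∫⁻ t in Set.Ioi (0:ℝ), g t := setLIntegral_mono hg_meas hle
      _ = ch := hch_eq.symm
    exact hch (top_le_iff.mp this)
  -- the ε-approximation step
  have key2 : ∀ ε : NNReal, 0 < ε → Fgauge n α s r u ^ (s/r) ≤ K * ch + ε := by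
    intro ε hε
    set enc : ℤ ≃ ℕ := Denumerable.eqv ℤ with henc
    set δ : ℤ → ℝ≥0∞ := fun i =>
      ((2:ℝ≥0∞) ^ (a*((i:ℝ)+1)))⁻¹ * ((ε:ℝ≥0∞) * 2⁻¹ ^ (enc i + 1)) with hδ_def
    have hδ0 : ∀ i, δ i ≠ 0 := by
      intro i
      apply mul_ne_zero (ENNReal.inv_ne_zero.mpr (two_rpow_ne_top _))
      exact mul_ne_zero (ENNReal.coe_ne_zero.mpr hε.ne') (pow_ne_zero _ (by norm_num))
    have hex : ∀ i : ℤ, ∃ fi : Rn n → ℝ≥0∞,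
        (Measurable fi ∧ ∀ x ∈ E i, 1 ≤ rieszPotential n α fi x) ∧
        ∫⁻ y, fi y ^ s ≤ rieszCap n α s (E i) + δ i := by
      intro i
      have h := ENNReal.lt_add_right (capfin i) (hδ0 i)
      conv_lhs at h => rw [rieszCap]
      simp only [iInf_lt_iff] at h
      obtain ⟨fi, hP, hlt⟩ := h
      exact ⟨fi, hP, hlt.le⟩
    choose F hF1 hF2 using hex
    set ci : ℤ → ℝ≥0∞ := fun i => (2:ℝ≥0∞) ^ (((i:ℝ)+1)/r) with hci_def
    have hci_s : ∀ i, (ci i) ^ s = (2:ℝ≥0∞) ^ (a*((i:ℝ)+1)) := by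
      intro i
      rw [hci_def]
      simp only
      rw [← ENNReal.rpow_mul]
      congr 1
      rw [ha_def]
      ring
    set f : Rn n → ℝ≥0∞ := fun x => (∑' i : ℤ, (ci i * F i x) ^ s) ^ (1/s) with hf_def
    have hfm : Measurable f :=
      (Measurable.ennreal_tsum fun i =>
        ((measurable_const.mul (hF1 i).1).pow_const s)).pow_const (1/s)
    have hfge : ∀ i x, ci i * F i x ≤ f x := by
      intro i x
      have h1 : (ci i * F i x) ^ s ≤ ∑' j : ℤ, (ci j * F j x) ^ s := ENNReal.le_tsum i
      have h2 := ENNReal.rpow_le_rpow h1 (le_of_lt (by positivity : (0:ℝ) < 1/s))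
      rwa [← ENNReal.rpow_mul, mul_one_div_cancel hs0', ENNReal.rpow_one] at h2
    have hpotf : ∀ i, ∀ x ∈ E i, ci i ≤ rieszPotential n α f x := by
      intro i x hx
      calc ci i = ci i * 1 := (mul_one _).symm
      _ ≤ ci i * rieszPotential n α (F i) x := mul_le_mul_right ((hF1 i).2 x hx) _
      _ = rieszPotential n α (fun y => ci i * F i y) x :=
          (rieszPotential_const_mul n α _ (two_rpow_ne_top _) _ x).symm
      _ ≤ rieszPotential n α f x := rieszPotential_mono n α (fun y => hfge i y) x
    have hcap0 : rieszCap n α s {x | rieszPotential n α f x < u x ^ (1/r)} = 0 := by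
      refine le_antisymm ?_ zero_le
      rw [← captop]
      apply rieszCap_mono
      intro x hx
      simp only [Set.mem_setOf_eq] at hx ⊢
      by_contra hne
      rcases eq_or_ne (u x) 0 with h0 | h0
      · rw [h0, ENNReal.zero_rpow_of_pos (by positivity)] at hx
        exact (not_lt.mpr zero_le) hx
      · obtain ⟨i, hi1, hi2⟩ := exists_dyadic h0 hne
        have hxE : x ∈ E i := ⟨hi1, hi2⟩
        have : u x ^ (1/r) ≤ ci i := by
          calc u x ^ (1/r) ≤ ((2:ℝ≥0∞) ^ ((i:ℝ)+1)) ^ (1/r) :=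
              ENNReal.rpow_le_rpow hi2.le (by positivity)
          _ = ci i := by rw [hci_def]; simp only; rw [← ENNReal.rpow_mul]; congr 1; ring
        exact absurd hx (not_lt.mpr (this.trans (hpotf i x hxE)))
    have hFs : ∫⁻ y, f y ^ s = ∑' i : ℤ, (ci i) ^ s * ∫⁻ y, F i y ^ s := by
      have hfs : ∀ x, f x ^ s = ∑' i : ℤ, (ci i) ^ s * F i x ^ s := by
        intro x
        rw [hf_def]
        simp only
        rw [← ENNReal.rpow_mul, one_div_mul_cancel hs0', ENNReal.rpow_one]
        exact tsum_congr fun i => ENNReal.mul_rpow_of_nonneg _ _ hs0.le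
      calc ∫⁻ y, f y ^ s = ∫⁻ y, ∑' i : ℤ, (ci i) ^ s * F i y ^ s := lintegral_congr hfs
      _ = ∑' i : ℤ, ∫⁻ y, (ci i) ^ s * F i y ^ s :=
          lintegral_tsum fun i => (measurable_const.mul ((hF1 i).1.pow_const s)).aemeasurable
      _ = ∑' i : ℤ, (ci i) ^ s * ∫⁻ y, F i y ^ s := tsum_congr fun i =>
          lintegral_const_mul' _ _ (by rw [hci_s i]; exact two_rpow_ne_top _)
    have hδsum : ∑' i : ℤ, (2:ℝ≥0∞) ^ (a*((i:ℝ)+1)) * δ i = (ε:ℝ≥0∞) := by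
      have hterm : ∀ i : ℤ, (2:ℝ≥0∞) ^ (a*((i:ℝ)+1)) * δ i
          = (ε:ℝ≥0∞) * 2⁻¹ ^ (enc i + 1) := by
        intro i
        rw [hδ_def]
        simp only
        rw [← mul_assoc, ENNReal.mul_inv_cancel (two_rpow_ne_zero _) (two_rpow_ne_top _), one_mul]
      rw [tsum_congr hterm]
      have := Equiv.tsum_eq enc.symm (fun i : ℤ => (ε:ℝ≥0∞) * 2⁻¹ ^ (enc i + 1))
      rw [← this]
      have h1 : ∀ k : ℕ, (ε:ℝ≥0∞) * 2⁻¹ ^ (enc (enc.symm k) + 1) = (ε:ℝ≥0∞) * 2⁻¹ ^ (k + 1) := by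
        intro k; rw [Equiv.apply_symm_apply]
      rw [tsum_congr h1, ENNReal.tsum_mul_left]
      have h2 : ∑' k : ℕ, (2⁻¹:ℝ≥0∞) ^ (k+1) = 1 := by
        simp only [pow_succ, ENNReal.tsum_mul_right, ENNReal.tsum_geometric,
          ENNReal.one_sub_inv_two]
        rw [inv_inv]
        exact ENNReal.mul_inv_cancel (by norm_num) (by norm_num)
      rw [h2, mul_one]
    have hfb : Fgauge n α s r u ≤ (∫⁻ y, f y ^ s) ^ (r/s) := by
      unfold Fgauge
      exact iInf₂_le f ⟨hfm, hcap0⟩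
    have hpow : Fgauge n α s r u ^ (s/r) ≤ ∫⁻ y, f y ^ s := by
      have := ENNReal.rpow_le_rpow hfb (le_of_lt (div_pos hs0 hr))
      rwa [← ENNReal.rpow_mul, show (r/s)*(s/r) = 1 by field_simp, ENNReal.rpow_one] at this
    calc Fgauge n α s r u ^ (s/r) ≤ ∫⁻ y, f y ^ s := hpow
    _ = ∑' i : ℤ, (ci i) ^ s * ∫⁻ y, F i y ^ s := hFs
    _ ≤ ∑' i : ℤ, (2:ℝ≥0∞) ^ (a*((i:ℝ)+1)) * (rieszCap n α s (E i) + δ i) := by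
        refine ENNReal.tsum_le_tsum fun i => ?_
        rw [hci_s i]
        exact mul_le_mul_right (hF2 i) _
    _ = (∑' i : ℤ, (2:ℝ≥0∞) ^ (a*((i:ℝ)+1)) * rieszCap n α s (E i))
        + ∑' i : ℤ, (2:ℝ≥0∞) ^ (a*((i:ℝ)+1)) * δ i := by
        rw [← ENNReal.tsum_add]
        exact tsum_congr fun i => mul_add _ _ _
    _ = (∑' i : ℤ, (2:ℝ≥0∞) ^ (a*((i:ℝ)+1)) * rieszCap n α s (E i)) + ε := by rw [hδsum]
    _ ≤ K * ch + ε := add_le_add hsum le_rfl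
  have h3 : Fgauge n α s r u ^ (s/r) ≤ K * ch :=
    ENNReal.le_of_forall_pos_le_add fun ε hε _ => key2 ε hε
  have h4 : Fgauge n α s r u = (Fgauge n α s r u ^ (s/r)) ^ (r/s) := by
    rw [← ENNReal.rpow_mul, show (s/r)*(r/s) = 1 by field_simp, ENNReal.rpow_one]
  rw [h4, ← ENNReal.mul_rpow_of_nonneg K ch hrs_pos.le]
  exact ENNReal.rpow_le_rpow h3 hrs_pos.le
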